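/- Marczewski pair property: Let H ⊆ ℕ^[∞] be a semiselective coideal. Then for every X ⊆ ℕ^[∞] there exists an H-Ramsey set Φ with X ⊆ Φ such that every H-Ramsey subset of Φ ∖ X is H-Ramsey null. -/

import Mathlib

open Set

/-- `ellR n A` : the set of the `n` least elements of `A ⊆ ℕ` (the approximation `rₙ(A)`). -/
noncomputable def ellR (n : ℕ) (A : Set ℕ) : Finset ℕ :=
  (Finset.range n).image (Nat.nth (· ∈ A))

/-- `a ⊏ B` : the finite set `a` is an initial segment of `B`. -/
def IsInitSeg (a : Finset ℕ) (B : Set ℕ) : Prop :=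
  ↑a ⊆ B ∧ ∀ x ∈ B, x ∉ a → ∀ y ∈ a, y < x

/-- The Ellentuck neighborhood `[a, A] = {B ∈ ℕ^[∞] : a ⊏ B ∧ B ⊆ A}`. -/
def ENbhd (a : Finset ℕ) (A : Set ℕ) : Set (Set ℕ) :=
  {B | B.Infinite ∧ IsInitSeg a B ∧ B ⊆ A}

/-- `[n, A] := [rₙ(A), A]`. -/
noncomputable def ENbhdN (n : ℕ) (A : Set ℕ) : Set (Set ℕ) :=
  ENbhd (ellR n A) A

/-- `depth_A(a)` : the least `n` with `a ⊆ rₙ(A)`. -/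
noncomputable def depth (A : Set ℕ) (a : Finset ℕ) : ℕ :=
  sInf {n | a ⊆ ellR n A}

/-- The one-step extensions of `a` inside `B`: the sets `a ∪ {x}` with `x ∈ B` greater
than every element of `a` (i.e. `r_{|a|+1}[a,B]`). -/
def oneStepExt (a : Finset ℕ) (B : Set ℕ) : Set (Finset ℕ) :=
  {b | ∃ x ∈ B, (∀ y ∈ a, y < x) ∧ b = insert x a}

/-- `H ⊆ ℕ^[∞]` is a coideal: upward closed, satisfies A3 mod H and A4 mod H. -/
def IsCoideal (H : Set (Set ℕ)) : Prop :=
  (∀ A ∈ H, A.Infinite) ∧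
  (∀ A ∈ H, ∀ B : Set ℕ, B.Infinite → A ⊆ B → B ∈ H) ∧
  (∀ A ∈ H, ∀ a : Finset ℕ, ↑a ⊆ A →
    (∀ B ∈ H ∩ ENbhdN (depth A a) A, (ENbhd a B).Nonempty) ∧
    (∀ B ∈ H, B ⊆ A → (ENbhd a B).Nonempty →
      ∃ A' ∈ H ∩ ENbhdN (depth A a) A,
        (ENbhd a A').Nonempty ∧ ENbhd a A' ⊆ ENbhd a B)) ∧
  (∀ A ∈ H, ∀ a : Finset ℕ, ↑a ⊆ A → ∀ O : Set (Finset ℕ),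
    ∃ B ∈ H ∩ ENbhdN (depth A a) A,
      oneStepExt a B ⊆ O ∨ oneStepExt a B ∩ O = ∅)

/-- `D` is dense open in `S` (with respect to `⊆`). -/
def DenseOpenIn (D S : Set (Set ℕ)) : Prop :=
  (∀ A ∈ S, ∃ B ∈ D, B ⊆ A) ∧ (∀ A ∈ S, ∀ B ∈ D, A ⊆ B → A ∈ D)

/-- `C` diagonalizes the family `{A_a}`: for every finite `a ⊆ C`, `[a,C] ⊆ [a,A_a]`. -/
def Diagonalizes (C : Set ℕ) (Afam : Finset ℕ → Set ℕ) : Prop :=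
  ∀ a : Finset ℕ, ↑a ⊆ C → ENbhd a C ⊆ ENbhd a (Afam a)

/-- `H` is a semiselective coideal. -/
def Semiselective (H : Set (Set ℕ)) : Prop :=
  IsCoideal H ∧
  ∀ A ∈ H, ∀ Dfam : Finset ℕ → Set (Set ℕ),
    (∀ a : Finset ℕ, ↑a ⊆ A → DenseOpenIn (Dfam a) (H ∩ ENbhdN (depth A a) A)) →
    ∀ B ∈ H, B ⊆ A →
      ∃ C ∈ H, C ⊆ B ∧ ∃ Afam : Finset ℕ → Set ℕ,
        (∀ a : Finset ℕ, ↑a ⊆ A → Afam a ∈ Dfam a) ∧ Diagonalizes C Afam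

/-- `X` is `H`-Ramsey. -/
def HRamsey (H X : Set (Set ℕ)) : Prop :=
  ∀ a : Finset ℕ, ∀ A ∈ H, (ENbhd a A).Nonempty →
    ∃ B ∈ ENbhd a A ∩ H, ENbhd a B ⊆ X ∨ ENbhd a B ∩ X = ∅

/-- `X` is `H`-Ramsey null. -/
def HRamseyNull (H X : Set (Set ℕ)) : Prop :=
  ∀ a : Finset ℕ, ∀ A ∈ H, (ENbhd a A).Nonempty →
    ∃ B ∈ ENbhd a A ∩ H, ENbhd a B ∩ X = ∅

/-- `X` is `H`-Baire. -/
def HBaire (H X : Set (Set ℕ)) : Prop :=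
  ∀ a : Finset ℕ, ∀ A ∈ H, (ENbhd a A).Nonempty →
    ∃ (b : Finset ℕ) (B : Set ℕ), B ∈ H ∧ (ENbhd b B).Nonempty ∧
      ENbhd b B ⊆ ENbhd a A ∧ (ENbhd b B ⊆ X ∨ ENbhd b B ∩ X = ∅)

/-- `X` is `H`-meager. -/
def HMeager (H X : Set (Set ℕ)) : Prop :=
  ∀ a : Finset ℕ, ∀ A ∈ H, (ENbhd a A).Nonempty →
    ∃ (b : Finset ℕ) (B : Set ℕ), B ∈ H ∧ (ENbhd b B).Nonempty ∧
      ENbhd b B ⊆ ENbhd a A ∧ ENbhd b B ∩ X = ∅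

/-- `Exp(H) = {[n,A] : n ∈ ℕ, A ∈ H}`. -/
def ExpH (H : Set (Set ℕ)) : Set (Set (Set ℕ)) :=
  {S | ∃ (n : ℕ) (A : Set ℕ), A ∈ H ∧ S = ENbhdN n A}

/-- `X` is `Exp(H)`-nowhere dense. -/
def ExpNwd (H X : Set (Set ℕ)) : Prop :=
  ∀ S ∈ ExpH H, ∃ T ∈ ExpH H, T ⊆ S ∧ T ∩ X = ∅

/-- Combinatorial forcing: `A` accepts `a` (relative to `H` and `F`). -/
def Accepts (H : Set (Set ℕ)) (F : Set (Finset ℕ)) (A : Set ℕ) (a : Finset ℕ) : Prop :=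
  ∀ B ∈ H ∩ ENbhdN (depth A a) A, ∃ n : ℕ, ellR n B ∈ F

/-- Combinatorial forcing: `A` rejects `a` (relative to `H` and `F`). -/
def Rejects (H : Set (Set ℕ)) (F : Set (Finset ℕ)) (A : Set ℕ) (a : Finset ℕ) : Prop :=
  ∀ B ∈ H ∩ ENbhdN (depth A a) A, ¬ Accepts H F B a

/-- `A ≤* B` : `A` is an almost-reduction of `B`. -/
def AlmostRed (A B : Set ℕ) : Prop :=
  ∃ a : Finset ℕ, ↑a ⊆ A ∧ ENbhd a A ⊆ ENbhd a B

/-- `D ⊆ H` is dense open in the preorder `(H, ≤*)`. -/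
def DenseOpenStar (H D : Set (Set ℕ)) : Prop :=
  D ⊆ H ∧ (∀ A ∈ H, ∃ B ∈ D, AlmostRed B A) ∧
  (∀ A ∈ H, ∀ B ∈ D, AlmostRed A B → A ∈ D)

/-- The family `{A_a}` is filtered by `⊆` (indexed by the finite subsets of `A`). -/
def FilteredFamily (A : Set ℕ) (Afam : Finset ℕ → Set ℕ) : Prop :=
  ∀ a b : Finset ℕ, ↑a ⊆ A → ↑b ⊆ A →
    ∃ c : Finset ℕ, ↑c ⊆ A ∧ Afam c ⊆ Afam a ∧ Afam c ⊆ Afam b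

/-- `H` is a selective coideal. -/
def SelectiveCoideal (H : Set (Set ℕ)) : Prop :=
  IsCoideal H ∧
  ∀ A ∈ H, ∀ Afam : Finset ℕ → Set ℕ,
    (∀ a : Finset ℕ, ↑a ⊆ A → Afam a ∈ H ∧ Afam a ⊆ A ∧ (ENbhd a (Afam a)).Nonempty) →
    FilteredFamily A Afam →
    ∃ B ∈ H, B ⊆ A ∧ Diagonalizes B Afam

/-- `U ⊆ ℕ^[∞]` is a filter on `(ℕ^[∞], ⊆)`. -/
def IsEFilter (U : Set (Set ℕ)) : Prop :=
  (∀ A ∈ U, A.Infinite) ∧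
  (∀ A ∈ U, ∀ B : Set ℕ, B.Infinite → A ⊆ B → B ∈ U) ∧
  (∀ A ∈ U, ∀ B ∈ U, ∀ a : Finset ℕ,
    (ENbhd a A).Nonempty → (ENbhd a B).Nonempty →
      ∃ C ∈ U, C ∈ ENbhd a A ∩ ENbhd a B)

/-- `U` is an ultrafilter: a maximal filter satisfying A3 mod U. -/
def IsEUltrafilter (U : Set (Set ℕ)) : Prop :=
  IsEFilter U ∧
  (∀ U' : Set (Set ℕ), IsEFilter U' → U ⊆ U' → U' = U) ∧
  (∀ A ∈ U, ∀ a : Finset ℕ, ↑a ⊆ A →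
    (∀ B ∈ U ∩ ENbhdN (depth A a) A, (ENbhd a B).Nonempty) ∧
    (∀ B ∈ U, B ⊆ A → (ENbhd a B).Nonempty →
      ∃ A' ∈ U ∩ ENbhdN (depth A a) A,
        (ENbhd a A').Nonempty ∧ ENbhd a A' ⊆ ENbhd a B))

/-- `U` is a selective ultrafilter. -/
def SelectiveUltrafilter (U : Set (Set ℕ)) : Prop :=
  IsEUltrafilter U ∧
  ∀ A ∈ U, ∀ Afam : Finset ℕ → Set ℕ,
    (∀ a : Finset ℕ, ↑a ⊆ A → Afam a ∈ U ∧ Afam a ⊆ A ∧ (ENbhd a (Afam a)).Nonempty) →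
    FilteredFamily A Afam →
    ∃ B ∈ U, B ⊆ A ∧ Diagonalizes B Afam

/-- The conditions of the Mathias poset `M_U` : pairs `(a, A)` with `A ∈ U`, `[a,A] ≠ ∅`. -/
def MathiasCond (U : Set (Set ℕ)) : Set (Finset ℕ × Set ℕ) :=
  {p | p.2 ∈ U ∧ (ENbhd p.1 p.2).Nonempty}

/-- `D` is a dense open subset of the Mathias poset `M_U`
(ordered by `(a,A) ≤ (b,B) ↔ [a,A] ⊆ [b,B]`). -/
def MathiasDenseOpen (U : Set (Set ℕ)) (D : Set (Finset ℕ × Set ℕ)) : Prop :=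
  D ⊆ MathiasCond U ∧
  (∀ p ∈ MathiasCond U, ∃ q ∈ D, ENbhd q.1 q.2 ⊆ ENbhd p.1 p.2) ∧
  (∀ p ∈ MathiasCond U, ∀ q ∈ D, ENbhd p.1 p.2 ⊆ ENbhd q.1 q.2 → p ∈ D)

/-- `A` captures `(a, D)`. -/
def Captures (U : Set (Set ℕ)) (D : Set (Finset ℕ × Set ℕ))
    (a : Finset ℕ) (A : Set ℕ) : Prop :=
  A ∈ U ∧ (ENbhd a A).Nonempty ∧
  ∀ B ∈ ENbhd a A, ∃ m : ℕ, m > a.card ∧ (ellR m B, A) ∈ D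


/-! ### Auxiliary development for the Marczewski pair theorem -/

namespace MarczewskiAux

open Finset in
/-- `tauOp s Y` : the set `s ∪ {x ∈ Y : x > max s}`. -/
def tauOp (s : Finset ℕ) (Y : Set ℕ) : Set ℕ :=
  ↑s ∪ {x ∈ Y | ∀ y ∈ s, y < x}

lemma tauOp_mono {s : Finset ℕ} {Y Z : Set ℕ} (h : Y ⊆ Z) : tauOp s Y ⊆ tauOp s Z := by
  intro x hx
  rcases hx with hx | ⟨hx1, hx2⟩
  · exact Or.inl hx
  · exact Or.inr ⟨h hx1, hx2⟩

lemma tauOp_filter (s : Finset ℕ) (Y : Set ℕ) :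
    tauOp s {x ∈ Y | ∀ y ∈ s, y < x} = tauOp s Y := by
  unfold tauOp
  ext x
  constructor
  · rintro (hx | ⟨⟨h1, _⟩, h3⟩)
    · exact Or.inl hx
    · exact Or.inr ⟨h1, h3⟩
  · rintro (hx | ⟨h1, h2⟩)
    · exact Or.inl hx
    · exact Or.inr ⟨⟨h1, h2⟩, h2⟩

lemma tail_subset_tauOp (s : Finset ℕ) (Y : Set ℕ) :
    {x ∈ Y | (s.sup id) + 1 ≤ x} ⊆ tauOp s Y := by
  intro x hx
  exact Or.inr ⟨hx.1, fun y hy =>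
    lt_of_le_of_lt (Finset.le_sup (f := id) hy) (lt_of_lt_of_le (Nat.lt_succ_self _) hx.2)⟩

lemma tail_infinite {Y : Set ℕ} (hY : Y.Infinite) (N : ℕ) : {x ∈ Y | N ≤ x}.Infinite := by
  have : Y \ Set.Iio N ⊆ {x ∈ Y | N ≤ x} := by
    intro x hx
    exact ⟨hx.1, not_lt.mp hx.2⟩
  exact (hY.diff (Set.finite_Iio N)).mono this

lemma tauOp_infinite {s : Finset ℕ} {Y : Set ℕ} (hY : Y.Infinite) : (tauOp s Y).Infinite :=
  ((tail_infinite hY ((s.sup id) + 1)).mono (tail_subset_tauOp s Y))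

lemma tauOp_subset {s : Finset ℕ} {Y A : Set ℕ} (hs : ↑s ⊆ A) (hY : Y ⊆ A) :
    tauOp s Y ⊆ A := by
  rintro x (hx | ⟨hx1, _⟩)
  · exact hs hx
  · exact hY hx1

lemma tauOp_initSeg (s : Finset ℕ) (Y : Set ℕ) : IsInitSeg s (tauOp s Y) := by
  constructor
  · exact Set.subset_union_left
  · rintro x (hx | ⟨_, hx2⟩) hxs
    · exact absurd hx hxs
    · exact fun y hy => hx2 y hy

lemma tauOp_mem_ENbhd {s : Finset ℕ} {Y : Set ℕ} (hY : Y.Infinite) :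
    tauOp s Y ∈ ENbhd s (tauOp s Y) :=
  ⟨tauOp_infinite hY, tauOp_initSeg s Y, subset_rfl⟩

/-- For infinite `A`, `ellR n A ⊆ A`. -/
lemma ellR_subset {A : Set ℕ} (hA : A.Infinite) (n : ℕ) : ↑(ellR n A) ⊆ A := by
  intro x hx
  simp only [ellR, Finset.coe_image, Set.mem_image, Finset.mem_coe, Finset.mem_range] at hx
  obtain ⟨k, -, rfl⟩ := hx
  exact Nat.nth_mem_of_infinite hA k

/-- If `b ⊆ A` is finite and `A` infinite, then `b ⊆ r_{depth A b}(A)`. -/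
lemma subset_ellR_depth {A : Set ℕ} (hA : A.Infinite) {b : Finset ℕ} (hb : ↑b ⊆ A) :
    b ⊆ ellR (depth A b) A := by
  classical
  have hne : {n | b ⊆ ellR n A}.Nonempty := by
    refine ⟨(b.sup fun x => Nat.count (· ∈ A) x) + 1, ?_⟩
    intro x hx
    simp only [ellR, Finset.mem_image, Finset.mem_range]
    refine ⟨Nat.count (· ∈ A) x, ?_, Nat.nth_count (hb hx)⟩
    exact Nat.lt_succ_of_le (Finset.le_sup (f := fun x => Nat.count (· ∈ A) x) hx)
  exact Nat.sInf_mem hne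

end MarczewskiAux

namespace MarczewskiAux

variable {H X : Set (Set ℕ)}

lemma coe_empty_subset (A : Set ℕ) : ↑(∅ : Finset ℕ) ⊆ A := by simp

/-- A coideal is closed under removing a bounded part. -/
lemma tail_mem (hco : IsCoideal H) {A : Set ℕ} (hA : A ∈ H) (N : ℕ) :
    {x ∈ A | N ≤ x} ∈ H := by
  obtain ⟨B, ⟨hBH, hBN⟩, hor⟩ :=
    hco.2.2.2 A hA ∅ (coe_empty_subset A) {t | ∃ x, N ≤ x ∧ t = {x}}
  have hBsubA : B ⊆ A := hBN.2.2
  have hBinf : B.Infinite := hco.1 B hBH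
  rcases hor with hsub | hdisj
  · have hsubT : B ⊆ {x ∈ A | N ≤ x} := by
      intro x hx
      have hmem : ({x} : Finset ℕ) ∈ oneStepExt ∅ B := ⟨x, hx, by simp, by simp⟩
      obtain ⟨x', hx', heq⟩ := hsub hmem
      have hxx : x = x' := by
        have := Finset.mem_singleton.mp (heq ▸ Finset.mem_singleton_self x)
        exact this
      exact ⟨hBsubA hx, hxx ▸ hx'⟩
    exact hco.2.1 B hBH _ (hBinf.mono hsubT) hsubT
  · exfalso
    apply hBinf
    refine Set.Finite.subset (Set.finite_Iio N) ?_
    intro x hx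
    by_contra hlt
    have hxN : N ≤ x := not_lt.mp (fun h => hlt h)
    have hmem : ({x} : Finset ℕ) ∈ oneStepExt ∅ B ∩ {t | ∃ x, N ≤ x ∧ t = {x}} :=
      ⟨⟨x, hx, by simp, by simp⟩, ⟨x, hxN, rfl⟩⟩
    rw [hdisj] at hmem
    exact hmem

lemma tauOp_mem (hco : IsCoideal H) {s : Finset ℕ} {Y : Set ℕ} (hY : Y ∈ H) :
    tauOp s Y ∈ H := by
  have htail := tail_mem hco hY ((s.sup id) + 1)
  exact hco.2.1 _ htail _ (tauOp_infinite (hco.1 Y hY)) (tail_subset_tauOp s Y)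

/-- The union of all `H`-basic neighbourhoods disjoint from `X`. -/
def WSet (H X : Set (Set ℕ)) : Set (Set ℕ) :=
  {C | ∃ (b : Finset ℕ) (B : Set ℕ), B ∈ H ∧ C ∈ ENbhd b B ∧ ENbhd b B ∩ X = ∅}

lemma WSet_disjoint_X {C : Set ℕ} (hC : C ∈ WSet H X) : C ∉ X := by
  obtain ⟨b, B, _, hCmem, hdisj⟩ := hC
  intro hCX
  have : C ∈ ENbhd b B ∩ X := ⟨hCmem, hCX⟩
  rw [hdisj] at this
  exact this

/-- `Y` accepts `s` : `[s, s ∪ (Y above s)] ⊆ W`. -/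
def Acc (H X : Set (Set ℕ)) (s : Finset ℕ) (Y : Set ℕ) : Prop :=
  ENbhd s (tauOp s Y) ⊆ WSet H X

/-- `Y` (strongly) rejects `s` : no `Z` essentially contained in `Y` accepts `s`. -/
def Rej (H X : Set (Set ℕ)) (s : Finset ℕ) (Y : Set ℕ) : Prop :=
  ∀ Z : Set ℕ, {x ∈ Z | ∀ y ∈ s, y < x} ⊆ Y → ¬ Acc H X s Z

lemma Acc.mono {s : Finset ℕ} {Y Z : Set ℕ} (h : Y ⊆ Z) (hZ : Acc H X s Z) :
    Acc H X s Y := by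
  intro C hC
  exact hZ ⟨hC.1, hC.2.1, hC.2.2.trans (tauOp_mono h)⟩

lemma Rej.mono {s : Finset ℕ} {Y Z : Set ℕ} (h : Y ⊆ Z) (hZ : Rej H X s Z) :
    Rej H X s Y := fun W hW => hZ W (hW.trans h)

/-- Key extraction lemma: larger elements of `C` belong to any diagonalizing target. -/
lemma elt_of_diag {b : Finset ℕ} {C Y : Set ℕ} (hd : ENbhd b C ⊆ ENbhd b Y)
    (hC : C.Infinite) (hbC : ↑b ⊆ C) {x : ℕ} (hx : x ∈ C) (hgt : ∀ y ∈ b, y < x) :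
    x ∈ Y := by
  set E : Set ℕ := ↑b ∪ {z ∈ C | x ≤ z ∧ ∀ y ∈ b, y < z} with hE
  have hEinf : E.Infinite := by
    refine (tail_infinite hC (x ⊔ ((b.sup id) + 1))).mono ?_
    intro z hz
    refine Or.inr ⟨hz.1, le_trans le_sup_left hz.2, fun y hy => ?_⟩
    exact lt_of_le_of_lt (Finset.le_sup (f := id) hy)
      (lt_of_lt_of_le (Nat.lt_succ_self _) (le_trans le_sup_right hz.2))
  have hEmem : E ∈ ENbhd b C := by
    refine ⟨hEinf, ⟨Set.subset_union_left, ?_⟩, ?_⟩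
    · rintro z (hz | ⟨_, _, hz3⟩) hzb
      · exact absurd hz hzb
      · exact fun y hy => hz3 y hy
    · rintro z (hz | ⟨hz1, _⟩)
      · exact hbC hz
      · exact hz1
  have hEY : E ⊆ Y := (hd hEmem).2.2
  exact hEY (Or.inr ⟨hx, le_refl x, hgt⟩)

lemma acc_transfer {b s : Finset ℕ} {C Y : Set ℕ} (hbs : b ⊆ s)
    (hd : ENbhd b C ⊆ ENbhd b Y) (hC : C.Infinite) (hbC : ↑b ⊆ C)
    (hacc : Acc H X s Y) : Acc H X s C := by
  intro C' hC'
  apply hacc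
  refine ⟨hC'.1, hC'.2.1, ?_⟩
  intro z hz
  by_cases hzs : z ∈ (↑s : Set ℕ)
  · exact Or.inl hzs
  · rcases hC'.2.2 hz with h | ⟨hz1, hz2⟩
    · exact absurd h hzs
    · exact Or.inr ⟨elt_of_diag hd hC hbC hz1 (fun y hy => hz2 y (hbs hy)), hz2⟩

lemma rej_transfer {b s : Finset ℕ} {C Y : Set ℕ} (hbs : b ⊆ s)
    (hd : ENbhd b C ⊆ ENbhd b Y) (hC : C.Infinite) (hbC : ↑b ⊆ C)
    (hrej : Rej H X s Y) : Rej H X s C := by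
  intro Z hZ hacc
  refine hrej Z ?_ hacc
  intro x hx
  exact elt_of_diag hd hC hbC (hZ hx) (fun y hy => hx.2 y (hbs hy))

end MarczewskiAux

namespace MarczewskiAux

variable {H X : Set (Set ℕ)}

theorem main_dichotomy (hH : Semiselective H) (X : Set (Set ℕ)) (a : Finset ℕ) {A : Set ℕ}
    (hA : A ∈ H) (haA : ↑a ⊆ A) :
    ∃ B ∈ ENbhd a A ∩ H, ENbhd a B ⊆ WSet H X ∨ ENbhd a B ∩ WSet H X = ∅ := by
  classical
  obtain ⟨hco, hsel⟩ := hH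
  have hinf : ∀ A ∈ H, A.Infinite := hco.1
  have hA4 := hco.2.2.2
  -- Stage 1: decide acceptance/rejection of every admissible extension of `a`.
  have hDfam : ∀ b : Finset ℕ, ↑b ⊆ A → DenseOpenIn
      {Y | Acc H X (a ∪ b) Y ∨ Rej H X (a ∪ b) Y} (H ∩ ENbhdN (depth A b) A) := by
    intro b _
    constructor
    · rintro Y -
      by_cases hr : Rej H X (a ∪ b) Y
      · exact ⟨Y, Or.inr hr, subset_rfl⟩
      · unfold Rej at hr
        push_neg at hr
        obtain ⟨Z, hZsub, haccZ⟩ := hr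
        refine ⟨{x ∈ Z | ∀ y ∈ a ∪ b, y < x}, Or.inl ?_, hZsub⟩
        unfold Acc
        rw [tauOp_filter]
        exact haccZ
    · rintro A' - B hB hAB
      rcases hB with h | h
      · exact Or.inl (Acc.mono hAB h)
      · exact Or.inr (Rej.mono hAB h)
  obtain ⟨C, hCH, hCA, Afam, hAfam, hdiag⟩ :=
    hsel A hA (fun b => {Y | Acc H X (a ∪ b) Y ∨ Rej H X (a ∪ b) Y}) hDfam A hA subset_rfl
  have hCinf : C.Infinite := hinf C hCH
  have decideC : ∀ s : Finset ℕ, a ⊆ s → ↑(s \ a) ⊆ C →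
      Acc H X s C ∨ Rej H X s C := by
    intro s has hsC
    have hbA : ↑(s \ a) ⊆ A := hsC.trans hCA
    have hmem := hAfam (s \ a) hbA
    have hd := hdiag (s \ a) hsC
    rw [Set.mem_setOf_eq, Finset.union_sdiff_of_subset has] at hmem
    have hbs : s \ a ⊆ s := Finset.sdiff_subset
    rcases hmem with h | h
    · exact Or.inl (acc_transfer hbs hd hCinf hsC h)
    · exact Or.inr (rej_transfer hbs hd hCinf hsC h)
  have ha_a : (↑(a \ a) : Set ℕ) ⊆ C := by simp
  rcases decideC a subset_rfl ha_a with hacc | hrej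
  · exact ⟨tauOp a C, ⟨⟨tauOp_infinite hCinf, tauOp_initSeg a C, tauOp_subset haA hCA⟩,
      tauOp_mem hco hCH⟩, Or.inl hacc⟩
  -- Stage 2: propagate rejection to all admissible extensions.
  have hEfam : ∀ b : Finset ℕ, ↑b ⊆ C → DenseOpenIn
      {Y | Rej H X (a ∪ b) C → ∀ x ∈ Y, (∀ y ∈ a ∪ b, y < x) →
        Rej H X (insert x (a ∪ b)) C} (H ∩ ENbhdN (depth C b) C) := by
    intro b hbC
    constructor
    · rintro Y ⟨hYH, hYN⟩
      by_cases hr : Rej H X (a ∪ b) C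
      swap
      · exact ⟨Y, fun h => absurd h hr, subset_rfl⟩
      have hYsubC : Y ⊆ C := hYN.2.2
      have hbY : ↑b ⊆ Y := fun z hz =>
        hYN.2.1.1 (Finset.mem_coe.mpr (subset_ellR_depth hCinf hbC (Finset.mem_coe.mp hz)))
      obtain ⟨B, ⟨hBH, hBN⟩, hor⟩ := hA4 Y hYH b hbY
        {u | ∃ x, (∀ y ∈ a ∪ b, y < x) ∧ ¬ Rej H X (insert x (a ∪ b)) C ∧ u = insert x b}
      have hBY : B ⊆ Y := hBN.2.2
      rcases hor with hone | hdisj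
      · exfalso
        have haccZ : Acc H X (a ∪ b) {x ∈ B | ∀ y ∈ a ∪ b, y < x} := by
          intro C' hC'
          have hC'inf : C'.Infinite := hC'.1
          have hdiffinf : (C' \ (↑(a ∪ b) : Set ℕ)).Infinite :=
            hC'inf.diff (a ∪ b).finite_toSet
          set x := sInf (C' \ (↑(a ∪ b) : Set ℕ)) with hx_def
          have hxmem : x ∈ C' \ (↑(a ∪ b) : Set ℕ) := Nat.sInf_mem hdiffinf.nonempty
          have hxZ : x ∈ B ∧ ∀ y ∈ a ∪ b, y < x := by
            rcases hC'.2.2 hxmem.1 with h | ⟨⟨h1, h2⟩, -⟩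
            · exact absurd h hxmem.2
            · exact ⟨h1, h2⟩
          have hmemO := hone ⟨x, hxZ.1, fun y hy => hxZ.2 y (Finset.mem_union_right a hy), rfl⟩
          obtain ⟨x', hgt', hnr', heq⟩ := hmemO
          have hxb : x ∉ b := fun h => lt_irrefl x (hxZ.2 x (Finset.mem_union_right a h))
          have hxx' : x = x' := by
            have hmem' : x ∈ insert x' b := heq ▸ Finset.mem_insert_self x b
            rcases Finset.mem_insert.mp hmem' with h | h
            · exact h
            · exact absurd h hxb
          rw [← hxx'] at hnr'
          have hsa : a ⊆ insert x (a ∪ b) :=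
            Finset.Subset.trans Finset.subset_union_left (Finset.subset_insert _ _)
          have hsubC : ↑((insert x (a ∪ b)) \ a) ⊆ C := by
            intro z hz
            have hz' := Finset.mem_sdiff.mp (Finset.mem_coe.mp hz)
            rcases Finset.mem_insert.mp hz'.1 with h | h
            · exact h ▸ (hYsubC (hBY hxZ.1))
            · rcases Finset.mem_union.mp h with h' | h'
              · exact absurd h' hz'.2
              · exact hbC (Finset.mem_coe.mpr h')
          have haccx : Acc H X (insert x (a ∪ b)) C := by
            rcases decideC (insert x (a ∪ b)) hsa hsubC with h | h
            · exact h
            · exact absurd h hnr'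
          apply haccx
          have hxlt : ∀ z ∈ C', z ∉ (↑(a ∪ b) : Set ℕ) → z ≠ x → x < z := fun z hz hzs hzx =>
            lt_of_le_of_ne (Nat.sInf_le ⟨hz, hzs⟩) (Ne.symm hzx)
          refine ⟨hC'inf, ⟨?_, ?_⟩, ?_⟩
          · intro z hz
            rcases Finset.mem_insert.mp (Finset.mem_coe.mp hz) with h | h
            · exact h ▸ hxmem.1
            · exact hC'.2.1.1 (Finset.mem_coe.mpr h)
          · intro z hz hzns y hy
            have hzs : z ∉ a ∪ b := fun h => hzns (Finset.mem_insert_of_mem h)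
            have hzx : z ≠ x := fun h => hzns (h ▸ Finset.mem_insert_self x (a ∪ b))
            rcases Finset.mem_insert.mp hy with h | h
            · exact h ▸ hxlt z hz (fun hh => hzs (Finset.mem_coe.mp hh)) hzx
            · exact hC'.2.1.2 z hz hzs y h
          · intro z hz
            by_cases hzs : z ∈ insert x (a ∪ b)
            · exact Or.inl (Finset.mem_coe.mpr hzs)
            · have hzs' : z ∉ (↑(a ∪ b) : Set ℕ) := fun h =>
                hzs (Finset.mem_insert_of_mem (Finset.mem_coe.mp h))
              rcases hC'.2.2 hz with h | ⟨⟨h1, h2⟩, -⟩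
              · exact absurd h hzs'
              · refine Or.inr ⟨hYsubC (hBY h1), ?_⟩
                intro y hy
                rcases Finset.mem_insert.mp hy with h' | h'
                · exact h' ▸ hxlt z hz hzs'
                    (fun hh => hzs (hh ▸ Finset.mem_insert_self x (a ∪ b)))
                · exact h2 y h'
        exact hr {x ∈ B | ∀ y ∈ a ∪ b, y < x}
          (fun z hz => hYsubC (hBY hz.1.1)) haccZ
      · refine ⟨B, ?_, hBY⟩
        intro _ x hxB hgtx
        by_contra hnr
        have hmem : insert x b ∈ oneStepExt b B ∩
            {u | ∃ x, (∀ y ∈ a ∪ b, y < x) ∧ ¬ Rej H X (insert x (a ∪ b)) C ∧ u = insert x b} :=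
          ⟨⟨x, hxB, fun y hy => hgtx y (Finset.mem_union_right a hy), rfl⟩, ⟨x, hgtx, hnr, rfl⟩⟩
        rw [hdisj] at hmem
        exact hmem
    · rintro A' - B hB hAB hrej' x hx hgtx
      exact hB hrej' x (hAB hx) hgtx
  obtain ⟨C₂, hC₂H, hC₂C, Afam2, hAfam2, hdiag2⟩ :=
    hsel C hCH (fun b => {Y | Rej H X (a ∪ b) C → ∀ x ∈ Y, (∀ y ∈ a ∪ b, y < x) →
      Rej H X (insert x (a ∪ b)) C}) hEfam C hCH subset_rfl
  have hC₂inf : C₂.Infinite := hinf C₂ hC₂H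
  have star : ∀ t : Finset ℕ, ↑t ⊆ C₂ → Rej H X (a ∪ t) C →
      ∀ x ∈ C₂, (∀ y ∈ a ∪ t, y < x) → Rej H X (insert x (a ∪ t)) C := by
    intro t ht hr x hx hgt
    have hxA : x ∈ Afam2 t :=
      elt_of_diag (hdiag2 t ht) hC₂inf ht hx (fun y hy => hgt y (Finset.mem_union_right a hy))
    exact hAfam2 t (ht.trans hC₂C) hr x hxA hgt
  have rejAll : ∀ t : Finset ℕ, ↑t ⊆ C₂ → (∀ x ∈ t, ∀ y ∈ a, y < x) →
      Rej H X (a ∪ t) C := by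
    intro t
    induction t using Finset.induction_on_max with
    | empty => intro _ _; simpa using hrej
    | insert x t hlt IH =>
      intro hsub hgt
      rw [Finset.union_insert]
      have htsub : ↑t ⊆ C₂ := fun z hz =>
        hsub (Finset.mem_coe.mpr (Finset.mem_insert_of_mem (Finset.mem_coe.mp hz)))
      apply star t htsub (IH htsub (fun z hz => hgt z (Finset.mem_insert_of_mem hz))) x
        (hsub (Finset.mem_coe.mpr (Finset.mem_insert_self x t)))
      intro y hy
      rcases Finset.mem_union.mp hy with h | h
      · exact hgt x (Finset.mem_insert_self x t) y h
      · exact hlt y h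
  refine ⟨tauOp a C₂, ⟨⟨tauOp_infinite hC₂inf, tauOp_initSeg a C₂,
    tauOp_subset haA (hC₂C.trans hCA)⟩, tauOp_mem hco hC₂H⟩, Or.inr ?_⟩
  rw [Set.eq_empty_iff_forall_notMem]
  rintro D ⟨hD1, hDW⟩
  obtain ⟨b₀, B₁, hB₁H, hDmem, hdisjX⟩ := hDW
  have hDsub : D ⊆ tauOp a C₂ := hD1.2.2
  have haD : (↑a : Set ℕ) ⊆ D := hD1.2.1.1
  have hb₀D : (↑b₀ : Set ℕ) ⊆ D := hDmem.2.1.1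
  have hDB₁ : D ⊆ B₁ := hDmem.2.2
  have htprop : ∀ x ∈ b₀ \ a, x ∈ C₂ ∧ ∀ y ∈ a, y < x := by
    intro x hx
    have hxb₀ : x ∈ b₀ := (Finset.mem_sdiff.mp hx).1
    have hxa : x ∉ a := (Finset.mem_sdiff.mp hx).2
    have hxD : x ∈ D := hb₀D (Finset.mem_coe.mpr hxb₀)
    rcases hDsub hxD with h | ⟨h1, h2⟩
    · exact absurd (Finset.mem_coe.mp h) hxa
    · exact ⟨h1, h2⟩
  have hrejb' : Rej H X (a ∪ b₀) C := by
    have hr := rejAll (b₀ \ a) (fun z hz => (htprop z (Finset.mem_coe.mp hz)).1)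
      (fun z hz => (htprop z hz).2)
    rwa [Finset.union_sdiff_self_eq_union] at hr
  refine hrejb' {x ∈ D | ∀ y ∈ a ∪ b₀, y < x} ?_ ?_
  · intro x hx
    rcases hDsub hx.1.1 with h | ⟨h1, -⟩
    · exact absurd (hx.1.2 x (Finset.mem_union_left b₀ (Finset.mem_coe.mp h))) (lt_irrefl x)
    · exact hC₂C h1
  · intro C' hC'
    refine ⟨b₀, B₁, hB₁H, ⟨hC'.1, ⟨?_, ?_⟩, ?_⟩, hdisjX⟩
    · intro z hz
      exact hC'.2.1.1 (Finset.mem_coe.mpr (Finset.mem_union_right a (Finset.mem_coe.mp hz)))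
    · intro z hz hzb₀ y hy
      rcases hC'.2.2 hz with h | ⟨⟨h1, h2⟩, -⟩
      · have hzb' : z ∈ a ∪ b₀ := Finset.mem_coe.mp h
        have hza : z ∈ a := by
          rcases Finset.mem_union.mp hzb' with h' | h'
          · exact h'
          · exact absurd h' hzb₀
        exact hDmem.2.1.2 z (haD (Finset.mem_coe.mpr hza)) hzb₀ y hy
      · exact h2 y (Finset.mem_union_right a hy)
    · intro z hz
      rcases hC'.2.2 hz with h | ⟨⟨h1, -⟩, -⟩
      · rcases Finset.mem_union.mp (Finset.mem_coe.mp h) with h' | h'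
        · exact hDB₁ (haD (Finset.mem_coe.mpr h'))
        · exact hDB₁ (hb₀D (Finset.mem_coe.mpr h'))
      · exact hDB₁ h1

end MarczewskiAux
/-- Marczewski pair property: the `H`-Ramsey sets together with the `H`-Ramsey null
sets form a Marczewski pair, for a semiselective coideal `H`. -/
theorem marczewski_pair (H : Set (Set ℕ)) (hH : Semiselective H)
    (X : Set (Set ℕ)) :
    ∃ Φ : Set (Set ℕ), HRamsey H Φ ∧ X ⊆ Φ ∧
      ∀ Y : Set (Set ℕ), Y ⊆ Φ \ X → HRamsey H Y → HRamseyNull H Y := by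
  classical
  refine ⟨X ∪ (MarczewskiAux.WSet H X)ᶜ, ?_, Set.subset_union_left, ?_⟩
  · -- `Φ` is `H`-Ramsey
    intro a A hA hne
    obtain ⟨D0, hD0⟩ := hne
    have haA : ↑a ⊆ A := hD0.2.1.1.trans hD0.2.2
    obtain ⟨B, hBmem, hor⟩ := MarczewskiAux.main_dichotomy hH X a hA haA
    refine ⟨B, hBmem, ?_⟩
    rcases hor with h | h
    · refine Or.inr (Set.eq_empty_iff_forall_notMem.mpr ?_)
      rintro C ⟨hC1, hC2⟩
      have hCW : C ∈ MarczewskiAux.WSet H X := h hC1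
      rcases hC2 with hX | hcomp
      · exact MarczewskiAux.WSet_disjoint_X hCW hX
      · exact hcomp hCW
    · refine Or.inl fun C hC => Or.inr fun hCW => ?_
      have hmem : C ∈ ENbhd a B ∩ MarczewskiAux.WSet H X := ⟨hC, hCW⟩
      rw [h] at hmem
      exact hmem
  · -- every `H`-Ramsey subset of `Φ \ X` is `H`-Ramsey null
    intro Y hYsub hYR a A hA hne
    obtain ⟨B, hBmem, hor⟩ := hYR a A hA hne
    rcases hor with h | h
    · exfalso
      have hBE : B ∈ ENbhd a B := ⟨hBmem.1.1, hBmem.1.2.1, subset_rfl⟩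
      have hBY : B ∈ Y := h hBE
      have hXdisj : ENbhd a B ∩ X = ∅ := by
        rw [Set.eq_empty_iff_forall_notMem]
        rintro C ⟨hC1, hC2⟩
        exact (hYsub (h hC1)).2 hC2
      have hBW : B ∈ MarczewskiAux.WSet H X := ⟨a, B, hBmem.2, hBE, hXdisj⟩
      rcases (hYsub hBY).1 with hX | hc
      · exact (hYsub hBY).2 hX
      · exact hc hBW
    · exact ⟨B, hBmem, h⟩
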